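/- Let κ(t) denote a horizontal segment of length t > 0 (as a translation class of oriented polylines). If a, b > 0 and the interleaved double chain of floating polylines F(a,b) = κ(a) : κ(b) : ε : ε : κ(a)⁻¹ : κ(b)⁻¹ : ε : ε is alphabetisable (i.e., there is a finite alphabet with reversal A, a valuation ψ assigning a nonempty floating polyline to each letter with ψ(w⁻¹) = ψ(w)⁻¹, and an interleaved double chain U of words over A with ψ(U_i) representing the i-th part of F(a,b) for all i), then a/b is rational. -/

import Mathlib

/-- Letterwise reversal of a word over an alphabet with reversal `inv`. -/
def wrev {A : Type*} (inv : A → A) (W : List A) : List A := (W.map inv).reverse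

/-- An interleaved double chain of words (indices mod 8). -/
def IDC {A : Type*} (inv : A → A) (U : ZMod 8 → List A) : Prop :=
  ∀ i : ZMod 8, U i ++ U (i + 1) = wrev inv (U (i + 4) ++ U (i + 5))

/-- Reversal of a floating polyline, represented by its list of edge vectors. -/
def prev (L : List (ℝ × ℝ)) : List (ℝ × ℝ) := (L.map (fun e => -e)).reverse

/-- Value of a valuation on a word: the concatenation of the letter polylines. -/
def psiW {A : Type*} (ψ : A → List (ℝ × ℝ)) (W : List A) : List (ℝ × ℝ) :=
  (W.map ψ).flatten


lemma comm_pow {A : Type} : ∀ (k : ℕ) (X Y : List A), X.length + Y.length ≤ k →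
    X ++ Y = Y ++ X →
    ∃ (Z : List A) (m n : ℕ),
      X = (List.replicate m Z).flatten ∧ Y = (List.replicate n Z).flatten := by
  intro k
  induction k with
  | zero =>
    intro X Y hlen _
    have hX : X = [] := List.eq_nil_of_length_eq_zero (by omega)
    have hY : Y = [] := List.eq_nil_of_length_eq_zero (by omega)
    exact ⟨[], 0, 0, by simp [hX], by simp [hY]⟩
  | succ k ih =>
    intro X Y hlen h
    by_cases hXnil : X = []
    · exact ⟨Y, 0, 1, by simp [hXnil], by simp⟩
    by_cases hYnil : Y = []
    · exact ⟨X, 1, 0, by simp, by simp [hYnil]⟩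
    have hX0 : 0 < X.length := List.length_pos_iff.mpr hXnil
    have hY0 : 0 < Y.length := List.length_pos_iff.mpr hYnil
    by_cases hle : X.length ≤ Y.length
    · have h1 : (X ++ Y).take X.length = X := List.take_left' rfl
      have h2 : (Y ++ X).take X.length = Y.take X.length :=
        List.take_append_of_le_length hle
      have hXpre : X = Y.take X.length := by
        conv_lhs => rw [← h1]
        rw [h, h2]
      set Y' := Y.drop X.length with hY'
      have hYdec : Y = X ++ Y' := by
        conv_lhs => rw [← List.take_append_drop X.length Y]
        rw [← hXpre]
      have h' : X ++ Y' = Y' ++ X := by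
        have h3 : X ++ (X ++ Y') = (X ++ Y') ++ X := by rw [← hYdec]; exact h
        rw [List.append_assoc] at h3
        exact List.append_cancel_left h3
      have hlen' : X.length + Y'.length ≤ k := by
        have : Y'.length = Y.length - X.length := by simp [hY']
        omega
      obtain ⟨Z, m, n', hXZ, hYZ⟩ := ih X Y' hlen' h'
      refine ⟨Z, m, m + n', hXZ, ?_⟩
      rw [hYdec, hXZ, hYZ, List.replicate_add, List.flatten_append]
    · push_neg at hle
      have h1 : (Y ++ X).take Y.length = Y := List.take_left' rfl
      have h2 : (X ++ Y).take Y.length = X.take Y.length :=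
        List.take_append_of_le_length hle.le
      have hYpre : Y = X.take Y.length := by
        conv_lhs => rw [← h1]
        rw [← h, h2]
      set X' := X.drop Y.length with hX'
      have hXdec : X = Y ++ X' := by
        conv_lhs => rw [← List.take_append_drop Y.length X]
        rw [← hYpre]
      have h' : Y ++ X' = X' ++ Y := by
        have h3 : Y ++ (Y ++ X') = (Y ++ X') ++ Y := by rw [← hXdec]; exact h.symm
        rw [List.append_assoc] at h3
        exact List.append_cancel_left h3
      have hlen' : Y.length + X'.length ≤ k := by
        have : X'.length = X.length - Y.length := by simp [hX']
        omega
      obtain ⟨Z, n, m', hYZ, hXZ⟩ := ih Y X' hlen' h'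
      refine ⟨Z, n + m', n, ?_, hYZ⟩
      rw [hXdec, hYZ, hXZ, List.replicate_add, List.flatten_append]
lemma wrev_append {A : Type*} (inv : A → A) (X Y : List A) :
    wrev inv (X ++ Y) = wrev inv Y ++ wrev inv X := by
  simp [wrev]

lemma sum_psiW {A : Type*} (ψ : A → List (ℝ × ℝ)) (W : List A) :
    ((psiW ψ W).map Prod.fst).sum = (W.map (fun w => ((ψ w).map Prod.fst).sum)).sum := by
  induction W with
  | nil => simp [psiW]
  | cons w t ih => simp [psiW, List.map_cons, List.flatten_cons] at ih ⊢; rw [← ih]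

lemma sum_flatten_replicate {A : Type*} (g : A → ℝ) (m : ℕ) (Z : List A) :
    (((List.replicate m Z).flatten).map g).sum = m * ((Z.map g).sum) := by
  induction m with
  | zero => simp
  | succ m ih =>
    rw [List.replicate_succ, List.flatten_cons, List.map_append, List.sum_append, ih]
    push_cast; ring

/-- If the interleaved double chain of floating polylines
`F(a,b) = κ(a) : κ(b) : ε : ε : κ(a)⁻¹ : κ(b)⁻¹ : ε : ε` (where `κ(t)` is a
horizontal segment of length `t`) is alphabetisable over a finite alphabet with
reversal, then `a/b` is rational. -/
theorem stmt17 (a b : ℝ) (ha : 0 < a) (hb : 0 < b)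
    (halph : ∃ (A : Type) (_ : Fintype A) (inv : A → A)
        (_ : Function.Involutive inv) (ψ : A → List (ℝ × ℝ)) (U : ZMod 8 → List A),
      (∀ w : A, ψ w ≠ []) ∧
      (∀ w : A, ψ (inv w) = prev (ψ w)) ∧
      IDC inv U ∧
      (∀ e ∈ psiW ψ (U 1), e.2 = 0 ∧ 0 < e.1) ∧
      ((psiW ψ (U 1)).map Prod.fst).sum = a ∧
      (∀ e ∈ psiW ψ (U 2), e.2 = 0 ∧ 0 < e.1) ∧
      ((psiW ψ (U 2)).map Prod.fst).sum = b ∧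
      U 3 = [] ∧ U 4 = [] ∧
      (∀ e ∈ psiW ψ (U 5), e.2 = 0 ∧ e.1 < 0) ∧
      ((psiW ψ (U 5)).map Prod.fst).sum = -a ∧
      (∀ e ∈ psiW ψ (U 6), e.2 = 0 ∧ e.1 < 0) ∧
      ((psiW ψ (U 6)).map Prod.fst).sum = -b ∧
      U 7 = [] ∧ U 0 = []) :
    ∃ q : ℚ, a = (q : ℝ) * b := by
  obtain ⟨A, _, inv, hinv, ψ, U, hne, hψinv, hidc, h1p, h1s, h2p, h2s, h3, h4,
    h5p, h5s, h6p, h6s, h7, h0⟩ := halph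
  -- IDC at 0 gives U 1 = wrev inv (U 5)
  have e0 := hidc 0
  rw [show (0 + 1 : ZMod 8) = 1 by decide, show (0 + 4 : ZMod 8) = 4 by decide,
    show (0 + 5 : ZMod 8) = 5 by decide, h0, h4, List.nil_append, List.nil_append] at e0
  -- IDC at 2 gives U 2 = wrev inv (U 6)
  have e2 := hidc 2
  rw [show (2 + 1 : ZMod 8) = 3 by decide, show (2 + 4 : ZMod 8) = 6 by decide,
    show (2 + 5 : ZMod 8) = 7 by decide, h3, h7, List.append_nil, List.append_nil] at e2
  -- IDC at 1 gives commutation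
  have e1 := hidc 1
  rw [show (1 + 1 : ZMod 8) = 2 by decide, show (1 + 4 : ZMod 8) = 5 by decide,
    show (1 + 5 : ZMod 8) = 6 by decide, wrev_append, ← e0, ← e2] at e1
  -- commuting words are powers of a common word
  obtain ⟨Z, m, n, hXZ, hYZ⟩ :=
    comm_pow ((U 1).length + (U 2).length) (U 1) (U 2) le_rfl e1
  set g : A → ℝ := fun w => ((ψ w).map Prod.fst).sum with hg
  set c : ℝ := (Z.map g).sum with hc
  have hA : a = m * c := by
    rw [← h1s, sum_psiW, ← hg, hXZ, sum_flatten_replicate]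
  have hB : b = n * c := by
    rw [← h2s, sum_psiW, ← hg, hYZ, sum_flatten_replicate]
  have hn : (n : ℝ) ≠ 0 := by
    intro h; rw [hB, h, zero_mul] at hb; exact lt_irrefl 0 hb
  refine ⟨(m : ℚ) / (n : ℚ), ?_⟩
  rw [hA, hB]
  push_cast
  field_simp
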